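/- For every positive integer n, Ω_n²/(Ω_{n-1}·Ω_{n+1}) equals the infinite product over k ≥ 1 of (2k+n)² / ((2k+n)² - 1). -/

import Mathlib

open Real

noncomputable def unitBallVolume (n : ℕ) : ℝ :=
  Real.pi ^ ((n : ℝ) / 2) / Real.Gamma (1 + (n : ℝ) / 2)

open Filter Finset Topology Nat in
private lemma aux_Q (x : ℝ) (hx : 0 < x) (N : ℕ) :
    ∏ k ∈ Finset.range N, ((2 * ((k : ℝ) + 1) + 2 * x) / (2 * ((k : ℝ) + 1) + 2 * x + 1))
      = (x + 1/2) * (∏ j ∈ Finset.range (N + 1), (x + j)) /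
          (x * ∏ j ∈ Finset.range (N + 1), (x + 1/2 + j)) := by
  have hA : (∏ j ∈ Finset.range (N + 1), (x + (j:ℝ)))
      = (∏ k ∈ Finset.range N, (x + ((k:ℝ) + 1))) * x := by
    rw [Finset.prod_range_succ']; push_cast; simp
  have hB : (∏ j ∈ Finset.range (N + 1), (x + 1/2 + (j:ℝ)))
      = (∏ k ∈ Finset.range N, (x + 1/2 + ((k:ℝ) + 1))) * (x + 1/2) := by
    rw [Finset.prod_range_succ']; push_cast; simp
  have hQ : ∀ k : ℕ, (2 * ((k : ℝ) + 1) + 2 * x) / (2 * ((k : ℝ) + 1) + 2 * x + 1)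
      = (x + ((k:ℝ) + 1)) / (x + 1/2 + ((k:ℝ) + 1)) := by
    intro k
    have h1 : (0:ℝ) < 2 * ((k : ℝ) + 1) + 2 * x + 1 := by positivity
    have h2 : (0:ℝ) < x + 1/2 + ((k:ℝ) + 1) := by positivity
    rw [div_eq_div_iff h1.ne' h2.ne']; ring
  have hBpos : (0:ℝ) < ∏ k ∈ Finset.range N, (x + 1/2 + ((k:ℝ) + 1)) :=
    Finset.prod_pos fun j _ => by positivity
  rw [hA, hB]
  calc ∏ k ∈ Finset.range N, ((2 * ((k : ℝ) + 1) + 2 * x) / (2 * ((k : ℝ) + 1) + 2 * x + 1))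
      = (∏ k ∈ Finset.range N, (x + ((k:ℝ) + 1))) /
        (∏ k ∈ Finset.range N, (x + 1/2 + ((k:ℝ) + 1))) := by
        rw [← Finset.prod_div_distrib]; exact Finset.prod_congr rfl fun k _ => hQ k
    _ = _ := by field_simp

open Filter Finset Topology Nat in
private lemma aux_P (x : ℝ) (hx : 0 < x) (N : ℕ) :
    ∏ k ∈ Finset.range N, ((2 * ((k : ℝ) + 1) + 2 * x) ^ 2 / ((2 * ((k : ℝ) + 1) + 2 * x) ^ 2 - 1))
      = (2 * N + 2 * x + 1) / (2 * x + 1) *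
        (∏ k ∈ Finset.range N, ((2 * ((k : ℝ) + 1) + 2 * x) / (2 * ((k : ℝ) + 1) + 2 * x + 1))) ^ 2 := by
  induction N with
  | zero => simp [div_self (by positivity : (2*x+1:ℝ) ≠ 0)]
  | succ N ih =>
      have h1 : (0:ℝ) < 2 * N + 2 * x + 1 := by positivity
      have h2 : (0:ℝ) < 2 * N + 2 * x + 3 := by positivity
      rw [Finset.prod_range_succ, ih, Finset.prod_range_succ]
      push_cast
      have h3 : (2 * ((N:ℝ) + 1) + 2 * x) ^ 2 - 1 = (2*N+2*x+1)*(2*N+2*x+3) := by ring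
      rw [h3]
      field_simp
      ring

open Filter Finset Topology Nat in
private lemma aux_ratio (x : ℝ) (hx : 0 < x) (N : ℕ) (hN : 1 ≤ N) :
    GammaSeq (x + 1/2) N / GammaSeq x N
      = (N:ℝ) ^ ((1:ℝ)/2) * ((∏ j ∈ Finset.range (N + 1), (x + j)) /
          (∏ j ∈ Finset.range (N + 1), (x + 1/2 + j))) := by
  have hNpos : (0:ℝ) < N := by exact_mod_cast hN
  have hA : (0:ℝ) < ∏ j ∈ Finset.range (N + 1), (x + (j:ℝ)) :=
    Finset.prod_pos fun j _ => by positivity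
  have hB : (0:ℝ) < ∏ j ∈ Finset.range (N + 1), (x + 1/2 + (j:ℝ)) :=
    Finset.prod_pos fun j _ => by positivity
  have hfact : (0:ℝ) < (N.factorial : ℝ) := by positivity
  have ha : (0:ℝ) < (N:ℝ) ^ x := rpow_pos_of_pos hNpos x
  have hb : (0:ℝ) < (N:ℝ) ^ ((1:ℝ)/2) := rpow_pos_of_pos hNpos _
  have hpow : (N:ℝ) ^ (x + 1/2) = (N:ℝ) ^ x * (N:ℝ) ^ ((1:ℝ)/2) := rpow_add hNpos _ _
  rw [Real.GammaSeq, Real.GammaSeq, hpow]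
  field_simp

open Filter Finset Topology Nat in
private lemma aux_lim (x : ℝ) (hx : 0 < x) :
    Filter.Tendsto (fun N : ℕ =>
        (2 * N + 2 * x + 1) / (2 * x + 1) *
          ((x + 1/2) * (∏ j ∈ Finset.range (N + 1), (x + j)) /
            (x * ∏ j ∈ Finset.range (N + 1), (x + 1/2 + j))) ^ 2)
      Filter.atTop
      (𝓝 ((x + 1/2) * Gamma (x + 1/2) ^ 2 / (x ^ 2 * Gamma x ^ 2))) := by
  have hG : (0:ℝ) < Gamma x := Gamma_pos_of_pos hx
  set g : ℕ → ℝ := fun N =>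
    (2 + (2 * x + 1) / N) * (1 / (2 * x + 1)) * ((x + 1/2) / x) ^ 2 *
      (GammaSeq (x + 1/2) N / GammaSeq x N) ^ 2 with hg
  have t1 : Filter.Tendsto (fun N : ℕ => 2 + (2 * x + 1) / N) Filter.atTop (𝓝 2) := by
    simpa using (tendsto_const_nhds.add (tendsto_const_div_atTop_nhds_zero_nat (2 * x + 1)))
  have t2 : Filter.Tendsto (fun N : ℕ => (GammaSeq (x + 1/2) N / GammaSeq x N) ^ 2)
      Filter.atTop (𝓝 ((Gamma (x + 1/2) / Gamma x) ^ 2)) :=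
    (((GammaSeq_tendsto_Gamma (x + 1/2)).div (GammaSeq_tendsto_Gamma x) hG.ne').pow 2)
  have tg : Filter.Tendsto g Filter.atTop
      (𝓝 (2 * (1 / (2 * x + 1)) * ((x + 1/2) / x) ^ 2 * (Gamma (x + 1/2) / Gamma x) ^ 2)) :=
    ((t1.mul tendsto_const_nhds).mul tendsto_const_nhds).mul t2
  have hval : 2 * (1 / (2 * x + 1)) * ((x + 1/2) / x) ^ 2 * (Gamma (x + 1/2) / Gamma x) ^ 2
      = (x + 1/2) * Gamma (x + 1/2) ^ 2 / (x ^ 2 * Gamma x ^ 2) := by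
    have h1 : (2*x+1 : ℝ) ≠ 0 := by positivity
    field_simp
  rw [← hval]
  apply tg.congr'
  filter_upwards [Filter.eventually_ge_atTop 1] with N hN
  have hNpos : (0:ℝ) < N := by exact_mod_cast hN
  have hA : (0:ℝ) < ∏ j ∈ Finset.range (N + 1), (x + (j:ℝ)) :=
    Finset.prod_pos fun j _ => by positivity
  have hB : (0:ℝ) < ∏ j ∈ Finset.range (N + 1), (x + 1/2 + (j:ℝ)) :=
    Finset.prod_pos fun j _ => by positivity
  have hb2 : ((N:ℝ) ^ ((1:ℝ)/2)) ^ 2 = N := by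
    rw [← Real.rpow_natCast ((N:ℝ) ^ ((1:ℝ)/2)) 2, ← Real.rpow_mul hNpos.le]
    norm_num
  rw [hg]
  simp only [aux_ratio x hx N hN]
  rw [mul_pow, hb2]
  have h1 : (2*x+1 : ℝ) ≠ 0 := by positivity
  field_simp
  ring

open Filter Finset Topology Nat in
private lemma aux_den_pos (x : ℝ) (hx2 : (1:ℝ) ≤ 2 * x) (k : ℕ) :
    (0:ℝ) < (2 * ((k : ℝ) + 1) + 2 * x) ^ 2 - 1 := by
  have : (0:ℝ) ≤ (k:ℝ) := Nat.cast_nonneg k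
  nlinarith

open Filter Finset Topology Nat in
private lemma aux_fpos (x : ℝ) (hx2 : (1:ℝ) ≤ 2 * x) (k : ℕ) :
    (0:ℝ) < (2 * ((k : ℝ) + 1) + 2 * x) ^ 2 /
      ((2 * ((k : ℝ) + 1) + 2 * x) ^ 2 - 1) := by
  have h := aux_den_pos x hx2 k
  positivity

open Filter Finset Topology Nat in
private lemma aux_log_summable (x : ℝ) (hx2 : (1:ℝ) ≤ 2 * x) :
    Summable fun k : ℕ => Real.log ((2 * ((k : ℝ) + 1) + 2 * x) ^ 2 /
      ((2 * ((k : ℝ) + 1) + 2 * x) ^ 2 - 1)) := by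
  have hden := aux_den_pos x hx2
  have hsum : Summable fun k : ℕ => 1 / ((k:ℝ) + 1) ^ 2 := by
    have := (summable_nat_add_iff (f := fun n : ℕ => 1 / (n:ℝ) ^ 2) 1).mpr
      (Real.summable_one_div_nat_pow.mpr one_lt_two)
    refine this.congr fun k => ?_
    push_cast
    ring_nf
  refine Summable.of_nonneg_of_le (fun k => ?_) (fun k => ?_) hsum
  · apply Real.log_nonneg
    rw [le_div_iff₀ (hden k)]
    nlinarith [hden k]
  · calc Real.log ((2 * ((k : ℝ) + 1) + 2 * x) ^ 2 / ((2 * ((k : ℝ) + 1) + 2 * x) ^ 2 - 1))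
        ≤ (2 * ((k : ℝ) + 1) + 2 * x) ^ 2 / ((2 * ((k : ℝ) + 1) + 2 * x) ^ 2 - 1) - 1 :=
          Real.log_le_sub_one_of_pos (aux_fpos x hx2 k)
      _ = 1 / ((2 * ((k : ℝ) + 1) + 2 * x) ^ 2 - 1) := by
          rw [div_sub_one (hden k).ne']
          congr 1
          ring
      _ ≤ 1 / ((k:ℝ) + 1) ^ 2 := by
          apply one_div_le_one_div_of_le (by positivity)
          have : (0:ℝ) ≤ (k:ℝ) := Nat.cast_nonneg k
          nlinarith

open Filter Finset Topology Nat in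
private lemma aux_mult (x : ℝ) (hx2 : (1:ℝ) ≤ 2 * x) :
    Multipliable fun k : ℕ => (2 * ((k : ℝ) + 1) + 2 * x) ^ 2 /
      ((2 * ((k : ℝ) + 1) + 2 * x) ^ 2 - 1) :=
  Real.multipliable_of_summable_log
    (fun k => aux_fpos x hx2 k) (aux_log_summable x hx2)

open Filter Finset Topology Nat in
theorem stmt_10 (n : ℕ) (hn : 1 ≤ n) :
    unitBallVolume n ^ 2 / (unitBallVolume (n - 1) * unitBallVolume (n + 1)) =
      ∏' k : ℕ, (2 * ((k : ℝ) + 1) + n) ^ 2 / ((2 * ((k : ℝ) + 1) + n) ^ 2 - 1) := by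
  have hn1 : (1:ℝ) ≤ (n:ℝ) := by exact_mod_cast hn
  set x : ℝ := (n:ℝ) / 2 with hxdef
  have hcast : (n:ℝ) = 2 * x := by rw [hxdef]; ring
  have hx2 : (1:ℝ) ≤ 2 * x := by rw [← hcast]; exact hn1
  have hx : 0 < x := by linarith
  have hfun : (fun k : ℕ => (2 * ((k : ℝ) + 1) + (n:ℝ)) ^ 2 / ((2 * ((k : ℝ) + 1) + (n:ℝ)) ^ 2 - 1))
      = fun k : ℕ => (2 * ((k : ℝ) + 1) + 2 * x) ^ 2 / ((2 * ((k : ℝ) + 1) + 2 * x) ^ 2 - 1) := by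
    funext k; rw [hcast]
  rw [hfun]
  have key : Filter.Tendsto
      (fun N : ℕ => ∏ k ∈ Finset.range N,
        ((2 * ((k : ℝ) + 1) + 2 * x) ^ 2 / ((2 * ((k : ℝ) + 1) + 2 * x) ^ 2 - 1)))
      Filter.atTop (𝓝 ((x + 1/2) * Gamma (x + 1/2) ^ 2 / (x ^ 2 * Gamma x ^ 2))) :=
    (aux_lim x hx).congr fun N => by rw [aux_P x hx N, aux_Q x hx N]
  have htprod : (∏' k : ℕ, ((2 * ((k : ℝ) + 1) + 2 * x) ^ 2 /
      ((2 * ((k : ℝ) + 1) + 2 * x) ^ 2 - 1)))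
      = (x + 1/2) * Gamma (x + 1/2) ^ 2 / (x ^ 2 * Gamma x ^ 2) :=
    tendsto_nhds_unique (aux_mult x hx2).hasProd.tendsto_prod_nat key
  rw [htprod]
  unfold unitBallVolume
  have c1 : ((n - 1 : ℕ) : ℝ) / 2 = x - 1/2 := by
    rw [Nat.cast_sub hn]; push_cast; rw [hcast]; ring
  have c2 : ((n + 1 : ℕ) : ℝ) / 2 = x + 1/2 := by push_cast; rw [hcast]; ring
  rw [c1, c2, show (n:ℝ)/2 = x from hxdef.symm]
  rw [show (1:ℝ) + x = x + 1 from add_comm 1 x, Real.Gamma_add_one hx.ne']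
  rw [show (1:ℝ) + (x - 1/2) = x + 1/2 from by ring]
  rw [show (1:ℝ) + (x + 1/2) = (x + 1/2) + 1 from by ring,
    Real.Gamma_add_one (by positivity : (x + 1/2 : ℝ) ≠ 0)]
  have hp1 : Real.pi ^ (x - 1/2) = Real.pi ^ x / Real.pi ^ ((1:ℝ)/2) := by
    rw [← Real.rpow_sub pi_pos]
  have hp2 : Real.pi ^ (x + 1/2) = Real.pi ^ x * Real.pi ^ ((1:ℝ)/2) := by
    rw [← Real.rpow_add pi_pos]
  rw [hp1, hp2]
  have ha : (0:ℝ) < Real.pi ^ x := rpow_pos_of_pos pi_pos x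
  have hb : (0:ℝ) < Real.pi ^ ((1:ℝ)/2) := rpow_pos_of_pos pi_pos _
  have hG : (0:ℝ) < Gamma x := Gamma_pos_of_pos hx
  have hG2 : (0:ℝ) < Gamma (x + 1/2) := Gamma_pos_of_pos (by positivity)
  field_simp
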